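/- arXiv:1804.07996 — 11 statements merged into one kernel-verified Lean document; each statement's English description precedes it below -/
import Mathlib

section
/- Every natural number except 1, 3, 5, and 7 is the sum of at most three natural numbers whose binary representation contains at least as many 0's as 1's. -/
/-- `n` has at least as many 0's as 1's in its binary representation (0 included). -/
def Sge (n : ℕ) : Prop := (Nat.digits 2 n).count 1 ≤ (Nat.digits 2 n).count 0

/-- `n` has at most one more 1 than 0's in its binary representation. -/
def Tge (n : ℕ) : Prop := (Nat.digits 2 n).count 1 ≤ (Nat.digits 2 n).count 0 + 1

lemma digits_double {u : ℕ} (hu : u ≠ 0) :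
    Nat.digits 2 (2 * u) = 0 :: Nat.digits 2 u := by
  rw [Nat.digits_def' (by norm_num : 1 < 2) (by omega)]
  congr 1
  · omega
  · congr 1; omega

lemma digits_double_add_one (u : ℕ) :
    Nat.digits 2 (2 * u + 1) = 1 :: Nat.digits 2 u := by
  rw [Nat.digits_def' (by norm_num : 1 < 2) (by omega)]
  congr 1
  · omega
  · congr 1; omega

lemma sge_tge {u : ℕ} (h : Sge u) : Tge u := by
  unfold Sge at h; unfold Tge; omega

lemma sge_double {u : ℕ} (h : Tge u) : Sge (2 * u) := by
  rcases Nat.eq_zero_or_pos u with h0 | h0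
  · subst h0; simp [Sge]
  · unfold Tge at h
    unfold Sge
    rw [digits_double (by omega)]
    simp [List.count_cons]
    omega

lemma tge_double {u : ℕ} (h : Tge u) : Tge (2 * u) := by
  rcases Nat.eq_zero_or_pos u with h0 | h0
  · subst h0; simp [Tge]
  · unfold Tge at h ⊢
    rw [digits_double (by omega)]
    simp [List.count_cons]
    omega

lemma tge_double_add_one {u : ℕ} (h : Sge u) : Tge (2 * u + 1) := by
  unfold Sge at h
  unfold Tge
  rw [digits_double_add_one]
  simp [List.count_cons]
  omega

lemma key : ∀ m : ℕ, ∃ u v : ℕ, Tge u ∧ Sge v ∧ m = u + v := by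
  intro m
  induction m using Nat.strong_induction_on with
  | _ m ih =>
    rcases Nat.eq_zero_or_pos m with h0 | h0
    · exact ⟨0, 0, by simp [Tge], by simp [Sge], by omega⟩
    · obtain ⟨u, v, hu, hv, huv⟩ := ih (m / 2) (by omega)
      rcases Nat.mod_two_eq_zero_or_one m with he | ho
      · exact ⟨2 * u, 2 * v, tge_double hu, sge_double (sge_tge hv), by omega⟩
      · exact ⟨2 * v + 1, 2 * u, tge_double_add_one hv, sge_double hu, by omega⟩

lemma digits_two_pow (a : ℕ) : Nat.digits 2 (2 ^ a) = List.replicate a 0 ++ [1] := by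
  induction a with
  | zero => simp
  | succ k ih =>
    rw [pow_succ, mul_comm, digits_double (by positivity), ih]
    simp [List.replicate_succ]

lemma sge_two_pow_add_one {a : ℕ} (h : 3 ≤ a) : Sge (2 ^ a + 1) := by
  have h1 : 2 ^ a + 1 = 2 * 2 ^ (a - 1) + 1 := by
    have h0 : a - 1 + 1 = a := by omega
    conv_lhs => rw [← h0]
    rw [pow_succ]; ring
  unfold Sge
  rw [h1, digits_double_add_one, digits_two_pow]
  simp [List.count_cons, List.count_append, List.count_replicate]
  omega

theorem sum_three_Sge (n : ℕ) (h : n ∉ ({1, 3, 5, 7} : Set ℕ)) :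
    ∃ x y z : ℕ, Sge x ∧ Sge y ∧ Sge z ∧ n = x + y + z := by
  simp only [Set.mem_insert_iff, Set.mem_singleton_iff, not_or] at h
  obtain ⟨h1, h3, h5, h7⟩ := h
  rcases Nat.mod_two_eq_zero_or_one n with he | ho
  · obtain ⟨u, v, hu, hv, huv⟩ := key (n / 2)
    exact ⟨2 * u, 2 * v, 0, sge_double hu, sge_double (sge_tge hv), by simp [Sge], by omega⟩
  · have h9 : 9 ≤ n := by omega
    set a := Nat.log 2 n with ha
    have ha3 : 3 ≤ a := by
      rw [ha]
      exact (Nat.le_log_iff_pow_le (by norm_num) (by omega)).mpr (by omega)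
    have hpow : 2 ^ a ≤ n := Nat.pow_log_le_self 2 (by omega)
    have h2 : 2 ^ a = 2 * 2 ^ (a - 1) := by
      have h0 : a - 1 + 1 = a := by omega
      conv_lhs => rw [← h0]
      rw [pow_succ]; ring
    obtain ⟨u, v, hu, hv, huv⟩ := key ((n - 2 ^ a - 1) / 2)
    refine ⟨2 ^ a + 1, 2 * u, 2 * v, sge_two_pow_add_one ha3,
      sge_double hu, sge_double (sge_tge hv), by omega⟩
end

section
/- For every n ≥ 1, the number 2^n − 1 cannot be written as a sum of two natural numbers each of whose binary representation has at least as many 0's as 1's. -/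
private lemma sum_rec (m : ℕ) :
    (Nat.digits 2 m).sum = m % 2 + (Nat.digits 2 (m / 2)).sum := by
  rcases Nat.eq_zero_or_pos m with rfl | hm
  · simp
  · rw [Nat.digits_def' (by norm_num) hm, List.sum_cons]

private lemma sum_add (n : ℕ) : ∀ x y : ℕ, x + y + 1 = 2 ^ n →
    (Nat.digits 2 x).sum + (Nat.digits 2 y).sum = n := by
  induction n with
  | zero =>
    intro x y h
    simp only [pow_zero] at h
    have : x = 0 ∧ y = 0 := by omega
    obtain ⟨rfl, rfl⟩ := this
    simp
  | succ n ih =>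
    intro x y h
    have h1 : x % 2 + y % 2 = 1 := by
      have := Nat.div_add_mod x 2; have := Nat.div_add_mod y 2
      have h2 : 2 ^ (n+1) = 2 * 2 ^ n := by ring
      omega
    have h2 : x / 2 + y / 2 + 1 = 2 ^ n := by
      have := Nat.div_add_mod x 2; have := Nat.div_add_mod y 2
      have h2 : 2 ^ (n+1) = 2 * 2 ^ n := by ring
      omega
    have := ih (x / 2) (y / 2) h2
    rw [sum_rec x, sum_rec y]
    omega

private lemma count_facts (l : List ℕ) (h : ∀ d ∈ l, d < 2) :
    l.sum = l.count 1 ∧ l.count 0 + l.count 1 = l.length := by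
  induction l with
  | nil => simp
  | cons a t ih =>
    obtain ⟨h1, h2⟩ := ih (fun d hd => h d (List.mem_cons_of_mem a hd))
    have ha : a < 2 := h a List.mem_cons_self
    interval_cases a <;> simp [List.count_cons, h1, h2] <;> omega

private lemma sge_bound {m k : ℕ} (h : Sge m) (hk : m < 2 ^ k) :
    2 * (Nat.digits 2 m).sum ≤ k := by
  obtain ⟨h1, h2⟩ := count_facts (Nat.digits 2 m)
    (fun d hd => Nat.digits_lt_base (by norm_num) hd)
  have hlen : (Nat.digits 2 m).length ≤ k := by
    rcases Nat.eq_zero_or_pos m with rfl | hm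
    · simp
    · rw [Nat.digits_len 2 m (by norm_num) hm.ne']
      have := Nat.log_lt_of_lt_pow hm.ne' hk
      omega
  unfold Sge at h
  omega

theorem pow_sub_one_not_sum_two_Sge (n : ℕ) (hn : 1 ≤ n) :
    ¬ Sge (2 ^ n - 1) ∧ ¬ ∃ x y : ℕ, Sge x ∧ Sge y ∧ 2 ^ n - 1 = x + y := by
  have hpow : 1 ≤ 2 ^ n := Nat.one_le_two_pow
  have key : ∀ x y : ℕ, Sge x → Sge y → 2 ^ n - 1 ≠ x + y := by
    intro x y hx hy hxy
    have hsum : x + y + 1 = 2 ^ n := by omega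
    have hS := sum_add n x y hsum
    -- WLOG x ≤ y
    wlog hle : x ≤ y generalizing x y
    · exact this y x hy hx (by omega) (by omega) (by omega) (by omega)
    have hpred : 2 * 2 ^ (n - 1) = 2 ^ n := by
      rw [← pow_succ']; congr 1; omega
    have hy2 : y < 2 ^ n := by omega
    have hx2 : x < 2 ^ (n - 1) := by omega
    have b1 := sge_bound hx hx2
    have b2 := sge_bound hy hy2
    omega
  refine ⟨fun h => ?_, fun ⟨x, y, hx, hy, hxy⟩ => key x y hx hy hxy⟩
  exact key (2 ^ n - 1) 0 h (by simp [Sge]) (by omega)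
end

section
/- There are infinitely many natural numbers that are not the sum of one or two digitally balanced binary numbers; in particular, every number whose binary representation is of the form 1^(2k+3) (an odd number ≥ 3 of 1's) has no such representation. -/
def Sbal (n : ℕ) : Prop := (Nat.digits 2 n).count 1 = (Nat.digits 2 n).count 0

lemma count01 (l : List ℕ) (h : ∀ d ∈ l, d < 2) :
    l.count 0 + l.count 1 = l.length := by
  induction l with
  | nil => simp
  | cons a t ih =>
    have ha : a < 2 := h a (by simp)
    have ht := ih (fun d hd => h d (by simp [hd]))
    interval_cases a <;> simp [List.count_cons] <;> omega

lemma sbal_len_even {x : ℕ} (h : Sbal x) : Even (Nat.digits 2 x).length := by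
  have hlt : ∀ d ∈ Nat.digits 2 x, d < 2 :=
    fun d hd => Nat.digits_lt_base (by norm_num) hd
  have := count01 (Nat.digits 2 x) hlt
  unfold Sbal at h
  exact ⟨(Nat.digits 2 x).count 1, by omega⟩

lemma not_sbal_of_odd_len {m z : ℕ} (hm : Odd m) (h1 : 1 ≤ m)
    (hz : 2 ^ (m - 1) ≤ z) (hz2 : z < 2 ^ m) : ¬ Sbal z := by
  intro hs
  have hz0 : z ≠ 0 := by
    have : 0 < 2 ^ (m - 1) := Nat.pow_pos (by norm_num)
    omega
  have hlog : Nat.log 2 z = m - 1 :=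
    Nat.log_eq_of_pow_le_of_lt_pow hz (by
      have : m - 1 + 1 = m := by omega
      rw [this]; exact hz2)
  have hlen : (Nat.digits 2 z).length = m := by
    rw [Nat.digits_len 2 z (by norm_num) hz0, hlog]; omega
  have := sbal_len_even hs
  rw [hlen] at this
  exact (Nat.not_even_iff_odd.mpr hm) this

lemma key_s3 (m : ℕ) (hm : Odd m) (h1 : 1 ≤ m) :
    ¬ Sbal (2 ^ m - 1) ∧ ¬ ∃ x y : ℕ, Sbal x ∧ Sbal y ∧ 2 ^ m - 1 = x + y := by
  have hpow : 2 ^ m = 2 * 2 ^ (m - 1) := by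
    rw [← pow_succ']
    congr 1
    omega
  have hpos : 0 < 2 ^ (m - 1) := Nat.pow_pos (by norm_num)
  constructor
  · exact not_sbal_of_odd_len hm h1 (by omega) (by omega)
  · rintro ⟨x, y, hx, hy, hsum⟩
    rcases le_total x y with hle | hle
    · exact not_sbal_of_odd_len hm h1 (show 2 ^ (m-1) ≤ y by omega)
        (by omega) hy
    · exact not_sbal_of_odd_len hm h1 (show 2 ^ (m-1) ≤ x by omega)
        (by omega) hx

theorem infinitely_many_not_sum_two_Sbal :
    {n : ℕ | ¬ Sbal n ∧ ¬ ∃ x y : ℕ, Sbal x ∧ Sbal y ∧ n = x + y}.Infinite ∧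
    ∀ k : ℕ, 2 ^ (2 * k + 3) - 1 ∈
      {n : ℕ | ¬ Sbal n ∧ ¬ ∃ x y : ℕ, Sbal x ∧ Sbal y ∧ n = x + y} := by
  have hmem : ∀ k : ℕ, 2 ^ (2 * k + 3) - 1 ∈
      {n : ℕ | ¬ Sbal n ∧ ¬ ∃ x y : ℕ, Sbal x ∧ Sbal y ∧ n = x + y} := by
    intro k
    exact key_s3 (2 * k + 3) ⟨k + 1, by ring⟩ (by omega)
  refine ⟨?_, hmem⟩
  apply Set.infinite_of_injective_forall_mem (f := fun k : ℕ => 2 ^ (2 * k + 3) - 1)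
  case hi =>
    intro a b hab
    simp only at hab
    have ha : 0 < 2 ^ (2 * a + 3) := Nat.pow_pos (by norm_num)
    have hb : 0 < 2 ^ (2 * b + 3) := Nat.pow_pos (by norm_num)
    have : 2 ^ (2 * a + 3) = 2 ^ (2 * b + 3) := by omega
    have := Nat.pow_right_injective (le_refl 2) this
    omega
  case hf => exact hmem
end

section
/- Every natural number is the sum of at most two natural numbers whose binary representation has at most as many 0's as 1's. -/
/-- `n` has at most as many 0's as 1's in its binary representation. -/
def Sle (n : ℕ) : Prop := (Nat.digits 2 n).count 0 ≤ (Nat.digits 2 n).count 1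

namespace SleProofAux

def z (n : ℕ) : ℕ := (Nat.digits 2 n).count 0
def o (n : ℕ) : ℕ := (Nat.digits 2 n).count 1

lemma digits_double {n : ℕ} (hn : 0 < n) :
    Nat.digits 2 (2 * n) = 0 :: Nat.digits 2 n := by
  rw [Nat.digits_def' (by norm_num : (1:ℕ) < 2) (by omega)]
  have h1 : 2 * n % 2 = 0 := by omega
  have h2 : 2 * n / 2 = n := by omega
  rw [h1, h2]

lemma digits_double_add_one (n : ℕ) :
    Nat.digits 2 (2 * n + 1) = 1 :: Nat.digits 2 n := by
  rw [Nat.digits_def' (by norm_num : (1:ℕ) < 2) (by omega)]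
  have h1 : (2 * n + 1) % 2 = 1 := by omega
  have h2 : (2 * n + 1) / 2 = n := by omega
  rw [h1, h2]

lemma z_double {n : ℕ} (hn : 0 < n) : z (2 * n) = z n + 1 := by
  simp [z, digits_double hn]

lemma o_double {n : ℕ} (hn : 0 < n) : o (2 * n) = o n := by
  simp [o, digits_double hn]

lemma z_double_add_one (n : ℕ) : z (2 * n + 1) = z n := by
  unfold z; rw [digits_double_add_one]; simp

lemma o_double_add_one (n : ℕ) : o (2 * n + 1) = o n + 1 := by
  unfold o; rw [digits_double_add_one]; simp

lemma z_one : z 1 = 0 := by simp [z]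
lemma o_one : o 1 = 1 := by simp [o]
lemma z_zero : z 0 = 0 := by simp [z]
lemma o_zero : o 0 = 0 := by simp [o]

/-- d(2b-1) ≥ d(b) - 1 -/
lemma pred_lemma : ∀ b : ℕ, 0 < b → z (2 * b - 1) + o b ≤ o (2 * b - 1) + z b + 1 := by
  intro b
  induction b using Nat.strong_induction_on with
  | _ b ih =>
    intro hb
    rcases Nat.even_or_odd b with ⟨c, hc⟩ | ⟨c, hc⟩
    · -- b = c + c, even case
      have hc1 : 0 < c := by omega
      have e1 : 2 * b - 1 = 2 * (2 * c - 1) + 1 := by omega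
      have e2 : b = 2 * c := by omega
      have h := ih c (by omega) hc1
      rw [e1, z_double_add_one, o_double_add_one, e2, z_double hc1, o_double hc1]
      omega
    · -- b = 2c + 1, odd case
      rcases Nat.eq_zero_or_pos c with rfl | hc1
      · have hb1 : b = 1 := by omega
        subst hb1
        simp [z_one, o_one]
      · have e1 : 2 * b - 1 = 2 * (2 * c) + 1 := by omega
        rw [e1, z_double_add_one, o_double_add_one, z_double hc1, o_double hc1, hc,
          z_double_add_one, o_double_add_one]
        omega

lemma b_pos {b : ℕ} (hb : z b + 1 ≤ o b) : 0 < b := by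
  rcases Nat.eq_zero_or_pos b with rfl | h
  · rw [z_zero, o_zero] at hb; omega
  · exact h

lemma main : ∀ n : ℕ, n = 0 ∨ ∃ a b : ℕ, n = a + b ∧ z a ≤ o a ∧ z b + 1 ≤ o b := by
  intro n
  induction n using Nat.strong_induction_on with
  | _ n ih =>
    rcases Nat.eq_zero_or_pos n with rfl | hn
    · exact Or.inl rfl
    right
    rcases Nat.even_or_odd n with ⟨m, hm⟩ | ⟨m, hm⟩
    · -- n = m + m, even, m ≥ 1
      have hm1 : 0 < m := by omega
      rcases ih m (by omega) with rfl | ⟨a, b, hab, ha, hb⟩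
      · omega
      have hb1 : 0 < b := b_pos hb
      refine ⟨2 * b - 1, 2 * a + 1, by omega, ?_, ?_⟩
      · have h := pred_lemma b hb1
        omega
      · rw [z_double_add_one, o_double_add_one]; omega
    · -- n = 2m + 1, odd
      rcases ih m (by omega) with rfl | ⟨a, b, hab, ha, hb⟩
      · exact ⟨0, 1, by omega, by rw [z_zero, o_zero], by rw [z_one, o_one]⟩
      have hb1 : 0 < b := b_pos hb
      refine ⟨2 * b, 2 * a + 1, by omega, ?_, ?_⟩
      · rw [z_double hb1, o_double hb1]; omega
      · rw [z_double_add_one, o_double_add_one]; omega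

end SleProofAux

theorem sum_two_Sle (n : ℕ) : ∃ x y : ℕ, Sle x ∧ Sle y ∧ n = x + y := by
  rcases SleProofAux.main n with rfl | ⟨a, b, hab, ha, hb⟩
  · exact ⟨0, 0, by simp [Sle], by simp [Sle], rfl⟩
  · exact ⟨a, b, ha, Nat.le_of_succ_le hb, hab⟩
end

section
/- Every natural number is the sum of at most two natural numbers whose binary representation has an unequal number of 0's and 1's. -/
/-- `n` has an unequal number of 0's and 1's in its binary representation. -/
def Sne (n : ℕ) : Prop := (Nat.digits 2 n).count 0 ≠ (Nat.digits 2 n).count 1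

namespace SumTwoSneAux

/-- number of zeros in binary rep -/
def z (n : ℕ) : ℕ := (Nat.digits 2 n).count 0
/-- number of ones in binary rep -/
def o (n : ℕ) : ℕ := (Nat.digits 2 n).count 1

lemma list_count (l : List ℕ) (h : ∀ x ∈ l, x < 2) : l.count 0 + l.count 1 = l.length := by
  induction l with
  | nil => simp
  | cons a t ih =>
    have ha : a < 2 := h a (by simp)
    have ht := ih (fun x hx => h x (by simp [hx]))
    interval_cases a <;> simp [List.count_cons] <;> omega

lemma len_eq (n : ℕ) : (Nat.digits 2 n).length = z n + o n :=
  (list_count _ (fun _ hx => Nat.digits_lt_base (by norm_num) hx)).symm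

lemma len_le_of_lt_pow {t a : ℕ} (h : t < 2 ^ a) : (Nat.digits 2 t).length ≤ a := by
  rcases Nat.eq_zero_or_pos t with rfl | ht
  · simp
  · rw [Nat.digits_len 2 t (by norm_num) ht.ne']
    have : Nat.log 2 t < a := Nat.log_lt_of_lt_pow ht.ne' h
    omega

lemma zo_add_pow {t a : ℕ} (h : t < 2 ^ a) :
    z (t + 2 ^ a) = z t + (a - (Nat.digits 2 t).length) ∧ o (t + 2 ^ a) = o t + 1 := by
  have hL : (Nat.digits 2 t).length ≤ a := len_le_of_lt_pow h
  have key := Nat.digits_append_zeroes_append_digits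
    (b := 2) (k := a - (Nat.digits 2 t).length) (m := 1) (n := t) (by norm_num) (by norm_num)
  rw [show (Nat.digits 2 t).length + (a - (Nat.digits 2 t).length) = a from by omega] at key
  rw [show Nat.digits 2 1 = [1] from by norm_num] at key
  rw [mul_one] at key
  constructor
  · rw [z, ← key]
    simp only [List.count_append, List.count_replicate]
    simp [z]
  · rw [o, ← key]
    simp only [List.count_append, List.count_replicate]
    simp [o]

lemma o_pos {r : ℕ} (hr : r ≠ 0) : 0 < o r := by
  have hne : Nat.digits 2 r ≠ [] := Nat.digits_ne_nil_iff_ne_zero.mpr hr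
  have h1 := Nat.getLast_digit_ne_zero 2 hr
  have hmem : (Nat.digits 2 r).getLast hne ∈ Nat.digits 2 r := List.getLast_mem hne
  have h2 : (Nat.digits 2 r).getLast hne < 2 := Nat.digits_lt_base (by norm_num) hmem
  have h3 : (Nat.digits 2 r).getLast hne = 1 := by omega
  rw [o]
  exact List.count_pos_iff.mpr (h3 ▸ hmem)

lemma key : ∀ n : ℕ, 0 < n → n ≠ 2 → z n = o n →
    ∃ x y : ℕ, n = x + y ∧ o x < z x ∧ z y ≠ o y := by
  intro n
  induction n using Nat.strong_induction_on with
  | _ n ih =>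
    intro hn hn2 hbal
    have hLzo : (Nat.digits 2 n).length = z n + o n := len_eq n
    have hL1 : 1 ≤ (Nat.digits 2 n).length :=
      List.length_pos_iff.mpr (Nat.digits_ne_nil_iff_ne_zero.mpr hn.ne')
    set L := (Nat.digits 2 n).length with hLdef
    set a := L - 1 with ha
    have hub : n < 2 ^ L := Nat.lt_base_pow_length_digits (by norm_num)
    have hlog : Nat.log 2 n = a := by
      have := Nat.digits_len 2 n (by norm_num) hn.ne'
      omega
    have hlb : 2 ^ a ≤ n := hlog ▸ Nat.pow_log_le_self 2 hn.ne'
    set r := n - 2 ^ a with hr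
    have hpow : 2 ^ L = 2 * 2 ^ a := by
      rw [show L = a + 1 from by omega, pow_succ]; ring
    have hrlt : r < 2 ^ a := by omega
    have hnr : n = r + 2 ^ a := by omega
    obtain ⟨hz, ho⟩ := zo_add_pow hrlt
    rw [← hnr] at hz ho
    have hLr : (Nat.digits 2 r).length = z r + o r := len_eq r
    -- r ≠ 0
    have hr0 : r ≠ 0 := by
      rintro h0
      have hz00 : z 0 = 0 := by simp [z]
      have ho00 : o 0 = 0 := by simp [o]
      have hl00 : (Nat.digits 2 (0:ℕ)).length = 0 := by simp
      rw [h0, hz00, hl00] at hz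
      rw [h0, ho00] at ho
      have ha1 : a = 1 := by omega
      have h2a : (2:ℕ) ^ a = 2 := by rw [ha1]; norm_num
      exact hn2 (by omega)
    have hor : 1 ≤ o r := o_pos hr0
    have hk2 : 2 ≤ o n := by omega
    have ha3 : a = 2 * o n - 1 := by omega
    by_cases hrb : z r = o r
    · -- r balanced
      have hLr2 : (Nat.digits 2 r).length = a - 1 := by omega
      by_cases hr2 : r = 2
      · -- n = 10
        have ho2 : o r = 1 := by
          rw [hr2]; simp [o, show Nat.digits 2 2 = [0,1] from by norm_num]
        have ha4 : a = 3 := by omega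
        have h2a : (2:ℕ) ^ a = 8 := by rw [ha4]; norm_num
        have hn10 : n = 10 := by omega
        refine ⟨4, 6, by omega, ?_, ?_⟩
        · simp [o, z, show Nat.digits 2 4 = [0,0,1] from by norm_num]
        · simp [o, z, show Nat.digits 2 6 = [0,1,1] from by norm_num]
      · -- recurse on r
        have hrn : r < n := by
          have : 0 < 2 ^ a := Nat.pow_pos (by norm_num)
          omega
        obtain ⟨x, y, hxy, hx, hy⟩ := ih r hrn (Nat.pos_of_ne_zero hr0) hr2 hrb
        have hxlt : x < 2 ^ (a - 1) := by
          have : r < 2 ^ (Nat.digits 2 r).length := Nat.lt_base_pow_length_digits (by norm_num)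
          rw [hLr2] at this
          omega
        have hxa : x < 2 ^ a := by
          have : 2 ^ (a - 1) ≤ 2 ^ a := Nat.pow_le_pow_right (by norm_num) (by omega)
          omega
        obtain ⟨hzx, hox⟩ := zo_add_pow hxa
        have hlenx : (Nat.digits 2 x).length ≤ a - 1 := len_le_of_lt_pow hxlt
        have ha1 : 1 ≤ a := by omega
        refine ⟨x + 2 ^ a, y, by omega, ?_, hy⟩
        rw [hzx, hox]
        omega
    · -- r unbalanced : x = 2^a, y = r
      have h0a : (0 : ℕ) < 2 ^ a := Nat.pow_pos (by norm_num)
      obtain ⟨hz0, ho0⟩ := zo_add_pow (t := 0) h0a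
      rw [zero_add] at hz0 ho0
      have hz00 : z 0 = 0 := by simp [z]
      have ho00 : o 0 = 0 := by simp [o]
      refine ⟨2 ^ a, r, by omega, ?_, hrb⟩
      rw [hz0, ho0]
      simp [hz00, ho00]
      omega

end SumTwoSneAux

open SumTwoSneAux in
theorem sum_two_Sne (n : ℕ) :
    ∃ x y : ℕ, (x = 0 ∨ Sne x) ∧ (y = 0 ∨ Sne y) ∧ n = x + y := by
  rcases Nat.eq_zero_or_pos n with rfl | hn
  · exact ⟨0, 0, Or.inl rfl, Or.inl rfl, rfl⟩
  by_cases hbal : z n = o n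
  · by_cases hn2 : n = 2
    · refine ⟨1, 1, Or.inr ?_, Or.inr ?_, by omega⟩ <;>
        simp [Sne, show Nat.digits 2 1 = [1] from by norm_num]
    · obtain ⟨x, y, hxy, hx, hy⟩ := key n hn hn2 hbal
      exact ⟨x, y, Or.inr (by simp only [Sne]; change z x ≠ o x; omega),
        Or.inr hy, hxy⟩
  · exact ⟨n, 0, Or.inr hbal, Or.inl rfl, by omega⟩
end

section
/- There are infinitely many even natural numbers that are not the sum of at most two totally balanced numbers. -/
def binRep (n : ℕ) : List ℕ := (Nat.digits 2 n).reverse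

def TotBalWord (w : List ℕ) : Prop :=
  w.count 1 = w.count 0 ∧ ∀ p : List ℕ, p <+: w → p.count 0 ≤ p.count 1

def STB (n : ℕ) : Prop := TotBalWord (binRep n)

lemma count_digits_pow2 (k : ℕ) :
    (Nat.digits 2 (2^k)).count 0 = k ∧ (Nat.digits 2 (2^k)).count 1 = 1 := by
  induction k with
  | zero => simp
  | succ k ih =>
    have hne : (2:ℕ)^(k+1) ≠ 0 := by positivity
    rw [Nat.digits_def' (by norm_num : 1 < 2) (Nat.pos_of_ne_zero hne)]
    have h1 : (2:ℕ)^(k+1) % 2 = 0 := by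
      simp [pow_succ, Nat.mul_mod_left]
    have h2 : (2:ℕ)^(k+1) / 2 = 2^k := by
      rw [pow_succ]; exact Nat.mul_div_cancel _ (by norm_num)
    rw [h1, h2]
    simp only [List.count_cons]
    rw [ih.1, ih.2]
    norm_num

lemma pow2_not_STB (k : ℕ) (hk : 2 ≤ k) : ¬ STB (2^k) := by
  intro h
  have hc := h.1
  unfold binRep at hc
  rw [List.count_reverse, List.count_reverse] at hc
  rw [(count_digits_pow2 k).1, (count_digits_pow2 k).2] at hc
  omega

lemma len_eq_counts (l : List ℕ) (h : ∀ a ∈ l, a < 2) :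
    l.length = l.count 0 + l.count 1 := by
  induction l with
  | nil => simp
  | cons a t ih =>
    have ha := h a (by simp)
    have ih' := ih (fun b hb => h b (by simp [hb]))
    interval_cases a <;> simp [List.count_cons, ih'] <;> omega

lemma STB_len_even (x : ℕ) (hx : STB x) : Even (Nat.digits 2 x).length := by
  have hlt : ∀ a ∈ Nat.digits 2 x, a < 2 := fun a ha => Nat.digits_lt_base (by norm_num) ha
  have h := len_eq_counts (Nat.digits 2 x) hlt
  have hc := hx.1
  unfold binRep at hc
  rw [List.count_reverse, List.count_reverse] at hc
  rw [hc] at h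
  exact ⟨(Nat.digits 2 x).count 0, h⟩

lemma key_s9 (m x y : ℕ) (hx : STB x) (hy : STB y) (hxy : y ≤ x)
    (h : 2^(2*m+3) = x + y) : False := by
  have hx2 : 2^(2*m+2) ≤ x := by
    have : 2^(2*m+3) ≤ 2 * x := by omega
    have h23 : (2:ℕ)^(2*m+3) = 2 * 2^(2*m+2) := by ring
    omega
  have hxne : x ≠ 0 := by
    have : (0:ℕ) < 2^(2*m+2) := by positivity
    omega
  set L := (Nat.digits 2 x).length with hL
  have hxlt : x < 2^L := Nat.lt_base_pow_length_digits (by norm_num)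
  have hLgt : 2*m+2 < L := by
    have := lt_of_le_of_lt hx2 hxlt
    exact (Nat.pow_lt_pow_iff_right (by norm_num)).mp this
  have hLeven := STB_len_even x hx
  have hL4 : 2*m+4 ≤ L := by
    rcases hLeven with ⟨c, hc⟩
    omega
  have hxge : 2^L ≤ 2*x := Nat.base_pow_length_digits_le 2 x (by norm_num) hxne
  have hmono : 2^(2*m+4) ≤ 2^L := Nat.pow_le_pow_right (by norm_num) hL4
  have h24 : (2:ℕ)^(2*m+4) = 2 * 2^(2*m+3) := by ring
  have : 2^(2*m+3) ≤ x := by omega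
  have hy0 : y = 0 ∧ x = 2^(2*m+3) := by omega
  exact pow2_not_STB (2*m+3) (by omega) (hy0.2 ▸ hx)

theorem infinitely_many_even_not_sum_two_STB :
    {n : ℕ | Even n ∧ ¬ STB n ∧ ¬ ∃ x y : ℕ, STB x ∧ STB y ∧ n = x + y}.Infinite := by
  apply Set.infinite_of_injective_forall_mem (f := fun m : ℕ => 2^(2*m+3))
  case hi =>
    intro a b hab
    simp only at hab
    have := Nat.pow_right_injective (le_refl 2) hab
    omega
  case hf =>
    intro m
    refine ⟨⟨2^(2*m+2), by ring⟩, pow2_not_STB _ (by omega), ?_⟩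
    rintro ⟨x, y, hx, hy, hxy⟩
    rcases le_total y x with h | h
    · exact key_s9 m x y hx hy h hxy
    · exact key_s9 m y x hy hx h (by omega)
end

section
/- For k ≥ 2, the greatest common divisor of the set of base-k digitally balanced numbers is (k−1)/2 if k is odd, and k−1 if k is even. -/
/-- `n` is base-`k` digitally balanced: every digit `0, …, k-1` occurs the same
number of times in its canonical base-`k` representation. -/
def DigBal (k n : ℕ) : Prop :=
  ∀ i j : ℕ, i < k → j < k → (Nat.digits k n).count i = (Nat.digits k n).count j

private lemma sum_eq_count (k : ℕ) (L : List ℕ) (h : ∀ x ∈ L, x < k) :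
    L.sum = ∑ i ∈ Finset.range k, L.count i * i := by
  induction L with
  | nil => simp
  | cons a t ih =>
    have ha : a < k := h a (List.mem_cons_self)
    have hcount : ∀ i, List.count i (a :: t) * i = List.count i t * i + (if i = a then i else 0) := by
      intro i
      rw [List.count_cons]
      by_cases h' : a = i
      · subst h'; simp; ring
      · simp [h', Ne.symm h']
    simp only [List.sum_cons, hcount, Finset.sum_add_distrib,
      Finset.sum_ite_eq' (Finset.range k) a id]
    rw [ih (fun x hx => h x (List.mem_cons_of_mem _ hx))]
    simp [Finset.mem_range.2 ha]
    omega

private lemma two_mul_list_sum_range (n : ℕ) : 2 * (List.range n).sum = n * (n - 1) := by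
  induction n with
  | zero => simp
  | succ m ih =>
    rw [List.range_succ]
    simp only [List.sum_append, List.sum_cons, List.sum_nil, Nat.mul_add, ih]
    cases m with
    | zero => simp
    | succ t => simp only [Nat.succ_sub_one]; ring

private lemma mod_pred (k : ℕ) (hk : 3 ≤ k) : k % (k - 1) = 1 := by
  have h1 : (k - 1) + 1 = k := by omega
  rw [← h1, Nat.add_sub_cancel, Nat.add_mod_left, Nat.mod_eq_of_lt (by omega)]

theorem gcd_digitally_balanced (k : ℕ) (hk : 2 ≤ k) (g : ℕ)
    (hg : g = if Odd k then (k - 1) / 2 else k - 1) :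
    (∀ n : ℕ, 0 < n → DigBal k n → g ∣ n) ∧
    (∀ d : ℕ, (∀ n : ℕ, 0 < n → DigBal k n → d ∣ n) → d ∣ g) := by
  constructor
  · -- every balanced number is divisible by g
    intro n hn hb
    rcases Nat.lt_or_ge k 3 with hk2 | hk3
    · -- k = 2 : g = 1
      have hk2' : k = 2 := by omega
      subst hk2'
      have hge : g = 1 := by rw [hg]; norm_num
      rw [hge]; exact one_dvd n
    · -- k ≥ 3
      have hme : n ≡ (Nat.digits k n).sum [MOD k - 1] :=
        Nat.modEq_digits_sum (k - 1) k (mod_pred k hk3) n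
      set L := Nat.digits k n with hL
      have hlt : ∀ x ∈ L, x < k := fun x hx => Nat.digits_lt_base (by omega) hx
      have hsum : L.sum = L.count 0 * (k * (k - 1) / 2) := by
        rw [sum_eq_count k L hlt]
        have hc : ∀ i ∈ Finset.range k, L.count i * i = L.count 0 * i := by
          intro i hi
          rw [hb i 0 (Finset.mem_range.1 hi) (by omega)]
        rw [Finset.sum_congr rfl hc, ← Finset.mul_sum, Finset.sum_range_id]
      rcases Nat.even_or_odd k with hke | hko
      · -- k even: g = k - 1 divides sum
        have hgo : ¬ Odd k := Nat.not_odd_iff_even.2 hke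
        obtain ⟨t, ht⟩ := hke
        have hdiv : k * (k - 1) / 2 = t * (k - 1) := by
          have : k * (k - 1) = 2 * (t * (k - 1)) := by rw [ht]; ring
          omega
        have hdvd : (k - 1) ∣ L.sum := by
          rw [hsum, hdiv]
          exact ⟨L.count 0 * t, by ring⟩
        have hres : (k - 1) ∣ n :=
          Nat.modEq_zero_iff_dvd.1 (hme.trans (Nat.modEq_zero_iff_dvd.2 hdvd))
        rw [hg, if_neg hgo]
        exact hres
      · -- k odd: g = (k-1)/2
        obtain ⟨m, hm⟩ := hko
        have hm1 : k - 1 = 2 * m := by omega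
        have hdiv : k * (k - 1) / 2 = k * m := by
          have : k * (k - 1) = 2 * (k * m) := by rw [hm1]; ring
          omega
        have hdvd : m ∣ L.sum := by
          rw [hsum, hdiv]
          exact ⟨L.count 0 * k, by ring⟩
        have hme' : n ≡ L.sum [MOD m] := hme.of_dvd ⟨2, by omega⟩
        have hres : m ∣ n :=
          Nat.modEq_zero_iff_dvd.1 (hme'.trans (Nat.modEq_zero_iff_dvd.2 hdvd))
        have hgm : g = m := by
          rw [hg, if_pos ⟨m, hm⟩, hm1]; omega
        rwa [hgm]
  · -- any common divisor divides g
    intro d hd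
    rcases Nat.lt_or_ge k 3 with hk2 | hk3
    · -- k = 2
      have hk2' : k = 2 := by omega
      subst hk2'
      have hb2 : DigBal 2 2 := by
        intro i j hi hj
        have hd2 : Nat.digits 2 2 = [0, 1] := by simp
        interval_cases i <;> interval_cases j <;> simp [hd2]
      have hb9 : DigBal 2 9 := by
        intro i j hi hj
        have hd9 : Nat.digits 2 9 = [1, 0, 0, 1] := by simp
        interval_cases i <;> interval_cases j <;> simp [hd9]
      have h2 := hd 2 (by norm_num) hb2
      have h9 := hd 9 (by norm_num) hb9
      have hdo : d ∣ 1 := by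
        have := Nat.dvd_gcd h2 h9
        simpa using this
      have hge : g = 1 := by rw [hg]; norm_num
      rw [hge]; exact hdo
    · -- k ≥ 3
      set R : List ℕ := (List.range k).drop 2 with hR
      have hrange : List.range k = 0 :: 1 :: R := by
        conv_lhs => rw [← List.take_append_drop 2 (List.range k)]
        rw [List.take_range]
        have h2k : (2 : ℕ) ⊓ k = 2 := by omega
        rw [h2k]
        rfl
      set L1 : List ℕ := 1 :: 0 :: R with hL1
      have hperm : (List.range k).Perm L1 := by
        rw [hrange]; exact List.Perm.swap 1 0 R
      have hcount1 : ∀ i < k, (List.range k).count i = 1 := by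
        intro i hi
        exact List.count_eq_one_of_mem (List.nodup_range) (List.mem_range.2 hi)
      have hmemlt : ∀ x ∈ List.range k, x < k := fun x hx => List.mem_range.1 hx
      have hmemlt1 : ∀ x ∈ L1, x < k := fun x hx => hmemlt x (hperm.mem_iff.2 hx)
      -- last digit is k - 1 ≠ 0
      have hconcat : List.range k = List.range (k - 1) ++ [k - 1] := by
        conv_lhs => rw [show k = (k - 1) + 1 by omega]
        exact List.range_succ
      have hq2 : (List.range k).getLast? = some (k - 1) := by
        rw [hconcat]; exact List.getLast?_concat
      have hRne : R ≠ [] := by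
        have hlen : R.length = k - 2 := by simp [hR]
        intro hc; rw [hc] at hlen; simp at hlen; omega
      obtain ⟨c, R', hRc⟩ := List.exists_cons_of_ne_nil hRne
      have hq1 : L1.getLast? = some (k - 1) := by
        rw [hrange, hRc, List.getLast?_cons_cons, List.getLast?_cons_cons] at hq2
        rw [hL1, hRc, List.getLast?_cons_cons, List.getLast?_cons_cons]
        exact hq2
      have hlast : ∀ h : List.range k ≠ [], (List.range k).getLast h ≠ 0 := by
        intro h
        have hthis := List.getLast?_eq_getLast h
        rw [hq2] at hthis
        have he : (List.range k).getLast h = k - 1 := by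
          simp only [Option.some.injEq] at hthis
          exact hthis.symm
        rw [he]; omega
      have hlast1 : ∀ h : L1 ≠ [], L1.getLast h ≠ 0 := by
        intro h
        have hthis := List.getLast?_eq_getLast h
        rw [hq1] at hthis
        have he : L1.getLast h = k - 1 := by
          simpa using hthis.symm
        rw [he]; omega
      set r : ℕ := Nat.ofDigits k R with hr
      set N2 : ℕ := Nat.ofDigits k (List.range k) with hN2
      set N1 : ℕ := Nat.ofDigits k L1 with hN1
      have hdig2 : Nat.digits k N2 = List.range k :=
        Nat.digits_ofDigits k (by omega) _ hmemlt hlast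
      have hdig1 : Nat.digits k N1 = L1 :=
        Nat.digits_ofDigits k (by omega) _ hmemlt1 hlast1
      have e2 : N2 = k + k * (k * r) := by
        rw [hN2, hrange, Nat.ofDigits_cons, Nat.ofDigits_cons, ← hr]; ring
      have e1 : N1 = 1 + k * (k * r) := by
        rw [hN1, hL1, Nat.ofDigits_cons, Nat.ofDigits_cons, ← hr]; ring
      have hbal2 : DigBal k N2 := by
        intro i j hi hj
        rw [hdig2, hcount1 i hi, hcount1 j hj]
      have hbal1 : DigBal k N1 := by
        intro i j hi hj
        rw [hdig1, ← hperm.count_eq, ← hperm.count_eq, hcount1 i hi, hcount1 j hj]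
      have hdN2 : d ∣ N2 := hd N2 (by omega) hbal2
      have hdN1 : d ∣ N1 := hd N1 (by omega) hbal1
      have hdk1 : d ∣ k - 1 := by
        have hsd := Nat.dvd_sub hdN2 hdN1
        have hsub : N2 - N1 = k - 1 := by omega
        rwa [hsub] at hsd
      rcases Nat.even_or_odd k with hke | hko
      · have hgo : ¬ Odd k := Nat.not_odd_iff_even.2 hke
        rw [hg, if_neg hgo]
        exact hdk1
      · obtain ⟨m, hm⟩ := hko
        have hm1 : k - 1 = 2 * m := by omega
        -- N2 % (k - 1) = m
        have hme : N2 ≡ (List.range k).sum [MOD k - 1] := by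
          have hmm := Nat.ofDigits_modEq k (k - 1) (List.range k)
          rwa [mod_pred k hk3, Nat.ofDigits_one] at hmm
        have hsumval : (List.range k).sum = m + (2 * m) * m := by
          have h2s := two_mul_list_sum_range k
          have hkk : k * (k - 1) = 2 * (m + 2 * m * m) := by rw [hm1, hm]; ring
          omega
        have hsummod : (List.range k).sum % (k - 1) = m := by
          rw [hsumval, hm1, Nat.add_mul_mod_self_left, Nat.mod_eq_of_lt (by omega)]
        have hN2mod : N2 % (k - 1) = m := by
          have hmm := hme
          unfold Nat.ModEq at hmm
          rw [hmm, hsummod]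
        have hdm : d ∣ m := by
          have hdmod : d ∣ N2 % (k - 1) := (Nat.dvd_mod_iff hdk1).2 hdN2
          rwa [hN2mod] at hdmod
        have hgm : g = m := by
          rw [hg, if_pos ⟨m, hm⟩, hm1]; omega
        rwa [hgm]
end

section
/- For every k ≥ 2, any additive-basis order D such that all sufficiently large multiples of g_k are sums of at most D base-k digitally balanced numbers must satisfy D ≥ k^{k−1} + 1. -/
lemma count_cons_eq (a i : ℕ) (t : List ℕ) :
    (a :: t).count i = t.count i + if a = i then 1 else 0 := by
  rw [List.count_cons]; simp

lemma length_eq_sum_count (k : ℕ) (l : List ℕ) (h : ∀ x ∈ l, x < k) :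
    l.length = ∑ i ∈ Finset.range k, l.count i := by
  induction l with
  | nil => simp
  | cons a t ih =>
    have ha : a < k := h a (by simp)
    have ht : ∀ x ∈ t, x < k := fun x hx => h x (by simp [hx])
    simp only [List.length_cons, ih ht, count_cons_eq]
    rw [Finset.sum_add_distrib, Finset.sum_ite_eq (Finset.range k) a (fun _ => 1)]
    simp [Finset.mem_range.mpr ha]

lemma digbal_len_dvd (k n : ℕ) (hk : 2 ≤ k) (hb : DigBal k n) :
    k ∣ (Nat.digits k n).length := by
  have hlt : ∀ x ∈ Nat.digits k n, x < k := fun x hx =>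
    Nat.digits_lt_base (by omega) hx
  rw [length_eq_sum_count k _ hlt]
  have : ∀ i ∈ Finset.range k, (Nat.digits k n).count i = (Nat.digits k n).count 0 := by
    intro i hi
    exact hb i 0 (Finset.mem_range.mp hi) (by omega)
  rw [Finset.sum_congr rfl this, Finset.sum_const]
  simp [Finset.card_range, mul_comm]

lemma digits_len_le_of_lt_pow {k x n : ℕ} (hk : 2 ≤ k) (hx : x < k ^ n) :
    (Nat.digits k x).length ≤ n := by
  by_contra h
  push_neg at h
  have hx0 : x ≠ 0 := by
    rintro rfl
    simp at h
  have h1 : k ^ (Nat.digits k x).length ≤ k * x :=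
    Nat.base_pow_length_digits_le k x (by omega) hx0
  have h2 : k ^ (n + 1) ≤ k ^ (Nat.digits k x).length :=
    Nat.pow_le_pow_right (by omega) h
  have h3 : k ^ (n + 1) = k * k ^ n := by ring
  nlinarith [Nat.one_le_two_pow (n := n)]

/-- Gap lemma: a positive balanced number below `k^(s*k + (k-1))` is below `k^(s*k)`. -/
lemma digbal_gap {k x s : ℕ} (hk : 2 ≤ k) (hb : DigBal k x) (hx : 0 < x)
    (hlt : x < k ^ (s * k + (k - 1))) : x < k ^ (s * k) := by
  obtain ⟨c, hc⟩ := digbal_len_dvd k x hk hb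
  have hlen : (Nat.digits k x).length ≤ s * k + (k - 1) :=
    digits_len_le_of_lt_pow hk hlt
  have hcs : c ≤ s := by
    by_contra h
    push_neg at h
    have h1 : k * (s + 1) ≤ k * c := Nat.mul_le_mul_left k h
    have e1 : k * (s + 1) = k * s + k := by ring
    have e2 : s * k = k * s := by ring
    omega
  have hlen2 : (Nat.digits k x).length ≤ s * k := by
    rw [hc]
    calc k * c ≤ k * s := Nat.mul_le_mul_left k hcs
    _ = s * k := mul_comm k s
  calc x < k ^ (Nat.digits k x).length := Nat.lt_base_pow_length_digits (by omega)
  _ ≤ k ^ (s * k) := Nat.pow_le_pow_right (by omega) hlen2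

theorem lower_bound_order (k : ℕ) (hk : 2 ≤ k) (g : ℕ)
    (hg : ∀ d : ℕ, (∀ n : ℕ, 0 < n → DigBal k n → d ∣ n) ↔ d ∣ g)
    (D N : ℕ)
    (hD : ∀ m : ℕ, N ≤ m → g ∣ m →
      ∃ l : List ℕ, l.length ≤ D ∧ (∀ x ∈ l, DigBal k x) ∧ l.sum = m) :
    k ^ (k - 1) + 1 ≤ D := by
  -- g divides every positive balanced number
  have hgdvd : ∀ n : ℕ, 0 < n → DigBal k n → g ∣ n := (hg g).mpr dvd_rfl
  -- construct two balanced numbers differing by k - 1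
  obtain ⟨j, hj⟩ : ∃ j, k = j + 2 := ⟨k - 2, by omega⟩
  set tail : List ℕ := List.range' 2 j ++ List.range k with htail
  have hrange : List.range k = 0 :: 1 :: List.range' 2 j := by
    rw [hj, List.range_eq_range', List.range'_succ, List.range'_succ]
  set La : List ℕ := 0 :: 1 :: tail with hLa
  set Lb : List ℕ := 1 :: 0 :: tail with hLb
  have hLaeq : La = List.range k ++ List.range k := by
    rw [hLa, htail, hrange]; simp
  have hperm : Lb.Perm La := List.Perm.swap 0 1 tail
  have hmemLa : ∀ x ∈ La, x < k := by
    rw [hLaeq]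
    intro x hx
    rcases List.mem_append.mp hx with h | h <;> exact List.mem_range.mp h
  have hmemLb : ∀ x ∈ Lb, x < k := fun x hx => hmemLa x (hperm.mem_iff.mp hx)
  have hrne : List.range k ≠ [] := by
    rw [hrange]; simp
  have hlastR? : (List.range k).getLast? = some (k - 1) := by
    have h1 : k = (k - 1) + 1 := by omega
    conv_lhs => rw [h1, List.range_succ]
    exact List.getLast?_concat
  have hlastLa? : La.getLast? = some (k - 1) := by
    rw [hLaeq, List.getLast?_append_of_ne_nil _ hrne, hlastR?]
  have htne : tail ≠ [] := by
    rw [htail]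
    simp only [ne_eq, List.append_eq_nil_iff]
    rintro ⟨-, h2⟩
    exact hrne h2
  have hlastT? : tail.getLast? = (List.range k).getLast? := by
    rw [htail, List.getLast?_append_of_ne_nil _ hrne]
  have hlastLb? : Lb.getLast? = some (k - 1) := by
    have : Lb = [1, 0] ++ tail := by rw [hLb]; simp
    rw [this, List.getLast?_append_of_ne_nil _ htne, hlastT?, hlastR?]
  have hlastLa : ∀ h : La ≠ [], La.getLast h ≠ 0 := by
    intro h
    have := List.getLast?_eq_getLast h
    rw [hlastLa?] at this
    have h2 : La.getLast h = k - 1 := by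
      injection this.symm with h3
    omega
  have hlastLb : ∀ h : Lb ≠ [], Lb.getLast h ≠ 0 := by
    intro h
    have := List.getLast?_eq_getLast h
    rw [hlastLb?] at this
    have h2 : Lb.getLast h = k - 1 := by
      injection this.symm with h3
    omega
  -- balancedness of the two numbers
  have hdigLa : Nat.digits k (Nat.ofDigits k La) = La :=
    Nat.digits_ofDigits k (by omega) La hmemLa hlastLa
  have hdigLb : Nat.digits k (Nat.ofDigits k Lb) = Lb :=
    Nat.digits_ofDigits k (by omega) Lb hmemLb hlastLb
  have hcountLa : ∀ i, i < k → La.count i = 2 := by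
    intro i hi
    rw [hLaeq, List.count_append]
    have : (List.range k).count i = 1 :=
      List.count_eq_one_of_mem List.nodup_range (List.mem_range.mpr hi)
    omega
  have hbalLa : DigBal k (Nat.ofDigits k La) := by
    intro i j' hi hj'
    rw [hdigLa, hcountLa i hi, hcountLa j' hj']
  have hbalLb : DigBal k (Nat.ofDigits k Lb) := by
    intro i j' hi hj'
    rw [hdigLb, hperm.count_eq i, hperm.count_eq j', hcountLa i hi, hcountLa j' hj']
  -- values
  have hvalLa : Nat.ofDigits k La = k + k ^ 2 * Nat.ofDigits k tail := by
    rw [hLa]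
    simp [Nat.ofDigits_cons]
    ring
  have hvalLb : Nat.ofDigits k Lb = 1 + k ^ 2 * Nat.ofDigits k tail := by
    rw [hLb]
    simp [Nat.ofDigits_cons]
    ring
  have hposLb : 0 < Nat.ofDigits k Lb := by omega
  have hposLa : 0 < Nat.ofDigits k La := by omega
  have hdvdLa := hgdvd _ hposLa hbalLa
  have hdvdLb := hgdvd _ hposLb hbalLb
  have hdiff : Nat.ofDigits k La = Nat.ofDigits k Lb + (k - 1) := by omega
  have hgk : g ∣ k - 1 := by
    have h5 := Nat.dvd_sub hdvdLa hdvdLb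
    rwa [hdiff, Nat.add_sub_cancel_left] at h5
  have hgpos : 0 < g := by
    rcases Nat.eq_zero_or_pos g with h | h
    · exfalso
      rw [h] at hdvdLb
      omega
    · exact h
  have hgle : g ≤ k - 1 := Nat.le_of_dvd (by omega) hgk
  -- main argument
  by_contra hcon
  push_neg at hcon
  have hD' : D ≤ k ^ (k - 1) := by omega
  set s : ℕ := N + 1 with hs
  set P : ℕ := k ^ (s * k) with hP
  set Q : ℕ := k ^ (k - 1) with hQ
  set E : ℕ := k ^ (s * k + (k - 1)) with hE
  have hEPQ : E = P * Q := by rw [hE, hP, hQ, pow_add]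
  have hPk : k ≤ P := by
    rw [hP]
    calc k = k ^ 1 := (pow_one k).symm
    _ ≤ k ^ (s * k) := Nat.pow_le_pow_right (by omega) (by nlinarith)
  have hQk : k ≤ Q := by
    rw [hQ]
    calc k = k ^ 1 := (pow_one k).symm
    _ ≤ k ^ (k - 1) := Nat.pow_le_pow_right (by omega) (by omega)
  have hEbig : N + k ≤ E := by
    have h1 : N + k < 2 ^ (N + k) := Nat.lt_two_pow_self
    have h2 : (2:ℕ) ^ (N + k) ≤ k ^ (N + k) := Nat.pow_le_pow_left hk _
    have h3 : (k:ℕ) ^ (N + k) ≤ k ^ (s * k + (k - 1)) := by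
      apply Nat.pow_le_pow_right (by omega)
      have h4 : s * k = (N + 1) * k := rfl
      nlinarith
    omega
  set m : ℕ := g * ((E - 1) / g) with hm
  have hdm : g ∣ m := ⟨_, rfl⟩
  have hmod := Nat.div_add_mod (E - 1) g
  have hrlt : (E - 1) % g < g := Nat.mod_lt _ hgpos
  have hmsum : m + (E - 1) % g = E - 1 := by
    rw [hm]; omega
  -- so  E - k + 1 ≤ m ≤ E - 1
  have hmN : N ≤ m := by omega
  obtain ⟨l, hlen, hbal, hsum⟩ := hD m hmN hdm
  -- each element is at most P - 1
  have hbound : ∀ x ∈ l, x ≤ P - 1 := by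
    intro x hx
    rcases Nat.eq_zero_or_pos x with h | h
    · omega
    · have hxm : x ≤ m := hsum ▸ List.single_le_sum (fun y _ => Nat.zero_le y) x hx
      have hxE : x < E := by omega
      have := digbal_gap hk (hbal x hx) h (hE ▸ hxE)
      omega
  have hsumle : m ≤ D * (P - 1) := by
    rw [← hsum]
    calc l.sum ≤ l.length • (P - 1) := List.sum_le_card_nsmul l _ hbound
    _ = l.length * (P - 1) := smul_eq_mul _ _
    _ ≤ D * (P - 1) := Nat.mul_le_mul_right _ hlen
  -- but D * (P - 1) + k ≤ E
  have hkey : D * (P - 1) + k ≤ E := by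
    rw [hEPQ]
    rcases le_or_gt D k with h | h
    · calc D * (P - 1) + k ≤ k * (P - 1) + k := by
            exact Nat.add_le_add_right (Nat.mul_le_mul_right _ h) k
      _ = k * ((P - 1) + 1) := by ring
      _ = k * P := by congr 1; omega
      _ ≤ Q * P := Nat.mul_le_mul_right _ hQk
      _ = P * Q := mul_comm _ _
    · calc D * (P - 1) + k ≤ D * (P - 1) + D := by omega
      _ = D * ((P - 1) + 1) := by ring
      _ = D * P := by congr 1; omega
      _ ≤ Q * P := Nat.mul_le_mul_right _ hD'
      _ = P * Q := mul_comm _ _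
  omega
end

section
/- If N is a positive base-3 digitally balanced number, then 27N + c is also a positive base-3 digitally balanced number for each c ∈ {5, 7, 11, 15, 19, 21}. -/
def DigBal3 (n : ℕ) : Prop :=
  (Nat.digits 3 n).count 0 = (Nat.digits 3 n).count 1 ∧
  (Nat.digits 3 n).count 1 = (Nat.digits 3 n).count 2

lemma digits27 (N c : ℕ) (hc3 : (Nat.digits 3 c).length = 3) :
    Nat.digits 3 (27 * N + c) = Nat.digits 3 c ++ Nat.digits 3 N := by
  rw [Nat.digits_append_digits (b := 3) (by norm_num), hc3]
  ring_nf

lemma digits27' (N c : ℕ) (hN : 0 < N) (hc2 : (Nat.digits 3 c).length = 2) :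
    Nat.digits 3 (27 * N + c) = Nat.digits 3 c ++ [0] ++ Nat.digits 3 N := by
  have := Nat.digits_append_zeroes_append_digits (b := 3) (k := 1) (m := N) (n := c)
    (by norm_num) hN
  rw [hc2] at this
  simp only [List.replicate] at this
  rw [this]
  ring_nf

theorem balanced3_shift (N : ℕ) (hN : 0 < N) (hb : DigBal3 N)
    (c : ℕ) (hc : c ∈ ({5, 7, 11, 15, 19, 21} : Set ℕ)) :
    0 < 27 * N + c ∧ DigBal3 (27 * N + c) := by
  obtain ⟨h1, h2⟩ := hb
  refine ⟨by positivity, ?_⟩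
  simp only [Set.mem_insert_iff, Set.mem_singleton_iff] at hc
  have h3 : (1:ℕ) < 3 := by norm_num
  rcases hc with rfl | rfl | rfl | rfl | rfl | rfl
  · have key : Nat.digits 3 (27 * N + 5) = [2, 1, 0] ++ Nat.digits 3 N := by
      rw [digits27' N 5 hN (by simp [Nat.digits_def' h3])]
      simp [Nat.digits_def' h3]
    constructor <;> · simp only [key, List.count_append, List.count_cons, List.count_nil]; norm_num; omega
  · have key : Nat.digits 3 (27 * N + 7) = [1, 2, 0] ++ Nat.digits 3 N := by
      rw [digits27' N 7 hN (by simp [Nat.digits_def' h3])]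
      simp [Nat.digits_def' h3]
    constructor <;> · simp only [key, List.count_append, List.count_cons, List.count_nil]; norm_num; omega
  · have key : Nat.digits 3 (27 * N + 11) = [2, 0, 1] ++ Nat.digits 3 N := by
      rw [digits27 N 11 (by simp [Nat.digits_def' h3])]
      simp [Nat.digits_def' h3]
    constructor <;> · simp only [key, List.count_append, List.count_cons, List.count_nil]; norm_num; omega
  · have key : Nat.digits 3 (27 * N + 15) = [0, 2, 1] ++ Nat.digits 3 N := by
      rw [digits27 N 15 (by simp [Nat.digits_def' h3])]
      simp [Nat.digits_def' h3]
    constructor <;> · simp only [key, List.count_append, List.count_cons, List.count_nil]; norm_num; omega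
  · have key : Nat.digits 3 (27 * N + 19) = [1, 0, 2] ++ Nat.digits 3 N := by
      rw [digits27 N 19 (by simp [Nat.digits_def' h3])]
      simp [Nat.digits_def' h3]
    constructor <;> · simp only [key, List.count_append, List.count_cons, List.count_nil]; norm_num; omega
  · have key : Nat.digits 3 (27 * N + 21) = [0, 1, 2] ++ Nat.digits 3 N := by
      rw [digits27 N 21 (by simp [Nat.digits_def' h3])]
      simp [Nat.digits_def' h3]
    constructor <;> · simp only [key, List.count_append, List.count_cons, List.count_nil]; norm_num; omega
end

section
/- Every natural number can be written as x + y where the binary representations of x and y each lie in the language 0^* + 0^*1(1+10+01)^* (i.e., x, y are 0 or have a binary representation of the form 1 followed by blocks from {1, 10, 01}). -/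
def InL (w : List ℕ) : Prop :=
  ∃ blocks : List (List ℕ),
    (∀ b ∈ blocks, b = [1] ∨ b = [1, 0] ∨ b = [0, 1]) ∧
    w = 1 :: blocks.flatten

lemma InL_one : InL [1] := ⟨[], by simp, by simp⟩

lemma InL_append {w b : List ℕ} (h : InL w)
    (hb : b = [1] ∨ b = [1, 0] ∨ b = [0, 1]) : InL (w ++ b) := by
  obtain ⟨bl, hbl, rfl⟩ := h
  refine ⟨bl ++ [b], ?_, by simp⟩
  intro c hc
  rcases List.mem_append.1 hc with h | h
  · exact hbl c h
  · simp at h; subst h; exact hb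

lemma InL_ne_zero {x : ℕ} (h : InL ((Nat.digits 2 x).reverse)) : x ≠ 0 := by
  rintro rfl
  obtain ⟨bl, _, hw⟩ := h
  simp at hw

lemma D_two_mul_add_one (x : ℕ) :
    (Nat.digits 2 (2 * x + 1)).reverse = (Nat.digits 2 x).reverse ++ [1] := by
  rw [Nat.digits_def' (by norm_num : 1 < 2) (by omega)]
  have h1 : (2 * x + 1) % 2 = 1 := by omega
  have h2 : (2 * x + 1) / 2 = x := by omega
  rw [h1, h2]
  simp

lemma D_four_mul_add_one (x : ℕ) (hx : 0 < x) :
    (Nat.digits 2 (4 * x + 1)).reverse = (Nat.digits 2 x).reverse ++ [0, 1] := by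
  rw [Nat.digits_def' (by norm_num : 1 < 2) (by omega)]
  have h1 : (4 * x + 1) % 2 = 1 := by omega
  have h2 : (4 * x + 1) / 2 = 2 * x := by omega
  rw [h1, h2, Nat.digits_def' (by norm_num : 1 < 2) (by omega)]
  have h3 : (2 * x) % 2 = 0 := by omega
  have h4 : (2 * x) / 2 = x := by omega
  rw [h3, h4]
  simp

lemma D_four_mul_add_two (x : ℕ) (hx : 0 < x) :
    (Nat.digits 2 (4 * x + 2)).reverse = (Nat.digits 2 x).reverse ++ [1, 0] := by
  rw [Nat.digits_def' (by norm_num : 1 < 2) (by omega)]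
  have h1 : (4 * x + 2) % 2 = 0 := by omega
  have h2 : (4 * x + 2) / 2 = 2 * x + 1 := by omega
  rw [h1, h2, Nat.digits_def' (by norm_num : 1 < 2) (by omega)]
  have h3 : (2 * x + 1) % 2 = 1 := by omega
  have h4 : (2 * x + 1) / 2 = x := by omega
  rw [h3, h4]
  simp

lemma step1 {x : ℕ} (h : x = 0 ∨ InL ((Nat.digits 2 x).reverse)) :
    InL ((Nat.digits 2 (2 * x + 1)).reverse) := by
  rcases h with rfl | h
  · simpa using InL_one
  · rw [D_two_mul_add_one]
    exact InL_append h (Or.inl rfl)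

lemma step01 {x : ℕ} (h : x = 0 ∨ InL ((Nat.digits 2 x).reverse)) :
    InL ((Nat.digits 2 (4 * x + 1)).reverse) := by
  rcases h with rfl | h
  · simpa using InL_one
  · rw [D_four_mul_add_one x (Nat.pos_of_ne_zero (InL_ne_zero h))]
    exact InL_append h (Or.inr (Or.inr rfl))

lemma step10 {x : ℕ} (h : InL ((Nat.digits 2 x).reverse)) :
    InL ((Nat.digits 2 (4 * x + 2)).reverse) := by
  rw [D_four_mul_add_two x (Nat.pos_of_ne_zero (InL_ne_zero h))]
  exact InL_append h (Or.inr (Or.inl rfl))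

theorem sum_two_lang (n : ℕ) :
    ∃ x y : ℕ, n = x + y ∧ (x = 0 ∨ InL ((Nat.digits 2 x).reverse)) ∧
      (y = 0 ∨ InL ((Nat.digits 2 y).reverse)) := by
  induction n using Nat.strong_induction_on with
  | _ n ih =>
  by_cases h0 : n = 0
  · exact ⟨0, 0, by omega, Or.inl rfl, Or.inl rfl⟩
  by_cases h1 : n = 1
  · exact ⟨1, 0, by omega, Or.inr (by simpa using InL_one), Or.inl rfl⟩
  rcases Nat.even_or_odd n with he | ho
  · -- n even, n ≥ 2 : n = 2*m + 2
    have h2 : n % 2 = 0 := Nat.even_iff.1 he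
    obtain ⟨a, b, hab, ha, hb⟩ := ih (n / 2 - 1) (by omega)
    exact ⟨2 * a + 1, 2 * b + 1, by omega, Or.inr (step1 ha), Or.inr (step1 hb)⟩
  · have h2 : n % 2 = 1 := Nat.odd_iff.1 ho
    by_cases h4 : n % 4 = 3
    · by_cases h3 : n = 3
      · refine ⟨3, 0, by omega, Or.inr ?_, Or.inl rfl⟩
        have : (3 : ℕ) = 2 * 1 + 1 := by norm_num
        rw [this]
        exact step1 (Or.inr (by simpa using InL_one))
      · -- n ≥ 7, n = 4*m + 3 with m ≥ 1
        obtain ⟨a, b, hab, ha, hb⟩ := ih ((n - 3) / 4) (by omega)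
        have hm : a + b = (n - 3) / 4 := by omega
        have hm1 : 1 ≤ a + b := by omega
        rcases hb with rfl | hb
        · -- b = 0, so a ≠ 0
          rcases ha with rfl | ha
          · omega
          · exact ⟨4 * 0 + 1, 4 * a + 2, by omega,
              Or.inr (step01 (Or.inl rfl)), Or.inr (step10 ha)⟩
        · exact ⟨4 * a + 1, 4 * b + 2, by omega,
            Or.inr (step01 ha), Or.inr (step10 hb)⟩
    · -- n % 4 = 1
      by_cases h5 : n = 5
      · refine ⟨5, 0, by omega, Or.inr ?_, Or.inl rfl⟩
        have : (5 : ℕ) = 4 * 1 + 1 := by norm_num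
        rw [this]
        exact step01 (Or.inr (by simpa using InL_one))
      · -- n ≥ 9, n = 4*m + 5 with m ≥ 1
        obtain ⟨a, b, hab, ha, hb⟩ := ih ((n - 5) / 4) (by omega)
        have hm : a + b = (n - 5) / 4 := by omega
        have hm1 : 1 ≤ a + b := by omega
        rcases hb with rfl | hb
        · rcases ha with rfl | ha
          · omega
          · exact ⟨2 * (2 * 0 + 1) + 1, 4 * a + 2, by omega,
              Or.inr (step1 (Or.inr (step1 (Or.inl rfl)))), Or.inr (step10 ha)⟩
        · exact ⟨2 * (2 * a + 1) + 1, 4 * b + 2, by omega,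
            Or.inr (step1 (Or.inr (step1 ha))), Or.inr (step10 hb)⟩
end

section
/- If x is a natural number whose binary representation (of length n) has at least as many 0's as 1's, and 2^n − 1 = x + y for some natural number y whose binary representation has length t < n, then y has strictly more 1's than 0's in its binary representation. -/
lemma ofDigits_replicate_zero (k : ℕ) : Nat.ofDigits 2 (List.replicate k 0) = 0 := by
  induction k with
  | zero => simp
  | succ k ih => simp [List.replicate_succ, Nat.ofDigits_cons, ih]

lemma ofDigits_complement (l : List ℕ) (hl : ∀ d ∈ l, d < 2) :
    Nat.ofDigits 2 (l.map (fun d => 1 - d)) + Nat.ofDigits 2 l + 1 = 2 ^ l.length := by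
  induction l with
  | nil => simp
  | cons d l ih =>
    have hd : d < 2 := hl d (by simp)
    have ih' := ih (fun e he => hl e (by simp [he]))
    simp only [List.map_cons, Nat.ofDigits_cons, List.length_cons, pow_succ]
    push_cast at ih' ⊢
    interval_cases d <;> omega

theorem complement_summand_more_ones (x y n : ℕ)
    (hlen : (Nat.digits 2 x).length = n)
    (hx : (Nat.digits 2 x).count 1 ≤ (Nat.digits 2 x).count 0)
    (hsum : 2 ^ n - 1 = x + y)
    (hy : (Nat.digits 2 y).length < n) :
    (Nat.digits 2 y).count 0 < (Nat.digits 2 y).count 1 := by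
  set M := Nat.digits 2 y with hM
  set t := M.length with ht
  have hM2 : ∀ d ∈ M, d < 2 := fun d hd => Nat.digits_lt_base (by norm_num) hd
  set k := n - t with hk
  have hk1 : 1 ≤ k := by omega
  set L : List ℕ := (M ++ List.replicate k 0).map (fun d => 1 - d) with hL
  have hlen2 : (M ++ List.replicate k 0).length = n := by
    simp only [List.length_append, List.length_replicate, ← ht]; omega
  have hofM : Nat.ofDigits 2 (M ++ List.replicate k 0) = y := by
    rw [Nat.ofDigits_append, ofDigits_replicate_zero, hM, Nat.ofDigits_digits]
    ring
  have hall : ∀ d ∈ M ++ List.replicate k 0, d < 2 := by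
    intro d hd
    rcases List.mem_append.1 hd with h | h
    · exact hM2 d h
    · simp [List.eq_of_mem_replicate h]
  have hsum' := ofDigits_complement _ hall
  rw [hofM, hlen2] at hsum'
  have h2n : 1 ≤ 2 ^ n := Nat.one_le_two_pow
  have hxL : Nat.ofDigits 2 L = x := by rw [← hL] at hsum'; omega
  have hdig : Nat.digits 2 x = L := by
    rw [← hxL]
    apply Nat.digits_ofDigits 2 (by norm_num)
    · intro d hd
      simp only [hL, List.mem_map] at hd
      obtain ⟨e, he, rfl⟩ := hd
      omega
    · intro hne
      have hrw : L = ((M ++ List.replicate (k - 1) 0).map (fun d => 1 - d)) ++ [1] := by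
        rw [hL]
        have : List.replicate k (0 : ℕ) = List.replicate (k - 1) 0 ++ [0] := by
          rw [← List.replicate_succ']
          congr 1
          omega
        rw [this, ← List.append_assoc, List.map_append]
        simp
      have h1 : L.getLast? = some (L.getLast hne) := List.getLast?_eq_getLast hne
      conv at h1 => lhs; rw [hrw]
      simp at h1
      omega
  rw [hdig] at hx hlen
  have hcount0 : L.count 0 = M.count 1 := by
    rw [hL, List.count_eq_countP, List.countP_map, List.countP_append,
      List.countP_replicate, List.count_eq_countP]
    have : List.countP ((fun x => x == 0) ∘ fun d => 1 - d) M
        = List.countP (fun x => x == 1) M := by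
      apply List.countP_congr
      intro a ha
      have := hM2 a ha
      interval_cases a <;> simp
    rw [this]
    simp
  have hcount1 : L.count 1 = M.count 0 + k := by
    rw [hL, List.count_eq_countP, List.countP_map, List.countP_append,
      List.countP_replicate, List.count_eq_countP]
    have : List.countP ((fun x => x == 1) ∘ fun d => 1 - d) M
        = List.countP (fun x => x == 0) M := by
      apply List.countP_congr
      intro a ha
      have := hM2 a ha
      interval_cases a <;> simp
    rw [this]
    simp
  rw [hcount0, hcount1] at hx
  omega
end
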